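/- Let b : ℝ → ℝ be defined by b(x) = x²(Φ(x) − 1) + x φ(x), so that b'(x) = φ(x) − 2x(1 − Φ(x)). Then for every x ∈ (0,∞): φ(x) · b(x) > (Φ(x) − 1/2) · b'(x). -/

import Mathlib

open MeasureTheory ProbabilityTheory Filter Topology

open Set

/-- The standard Gaussian density `φ(x) = e^{-x²/2}/√(2π)`. -/
noncomputable def gaussPhi (x : ℝ) : ℝ := Real.exp (-x ^ 2 / 2) / Real.sqrt (2 * Real.pi)

/-- The standard Gaussian distribution function `Φ(x) = ∫_{-∞}^x φ`. -/
noncomputable def gaussCdf (x : ℝ) : ℝ := ((gaussianReal 0 1) (Set.Iic x)).toReal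

/-- `b(x) = x²(Φ(x) − 1) + x φ(x)`. -/
noncomputable def bfun (x : ℝ) : ℝ := x ^ 2 * (gaussCdf x - 1) + x * gaussPhi x

/-- `b'(x) = φ(x) − 2x(1 − Φ(x))`. -/
noncomputable def bfun' (x : ℝ) : ℝ := gaussPhi x - 2 * x * (1 - gaussCdf x)

lemma gaussPhi_pos (x : ℝ) : 0 < gaussPhi x :=
  div_pos (Real.exp_pos _) (Real.sqrt_pos.mpr (by positivity))

lemma gaussPhi_eq (x : ℝ) : gaussPhi x = gaussianPDFReal 0 1 x := by
  simp [gaussPhi, gaussianPDFReal, div_eq_inv_mul]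

lemma gaussPhi_integrable : Integrable gaussPhi :=
  (integrable_gaussianPDFReal 0 1).congr (Filter.Eventually.of_forall fun x => (gaussPhi_eq x).symm)

lemma continuous_gaussPhi : Continuous gaussPhi := by
  unfold gaussPhi; fun_prop

lemma gaussPhi_neg (x : ℝ) : gaussPhi (-x) = gaussPhi x := by simp [gaussPhi]

lemma integral_gaussPhi : ∫ t, gaussPhi t = 1 := by
  rw [show gaussPhi = gaussianPDFReal 0 1 from funext gaussPhi_eq]
  exact integral_gaussianPDFReal_eq_one 0 one_ne_zero

lemma hasDerivAt_gaussPhi (x : ℝ) : HasDerivAt gaussPhi (-x * gaussPhi x) x := by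
  have h1 : HasDerivAt (fun y : ℝ => -y ^ 2 / 2) (-x) x := by
    have := ((hasDerivAt_pow 2 x).neg).div_const 2
    refine this.congr_deriv ?_; push_cast; ring
  have := (h1.exp).div_const (Real.sqrt (2 * Real.pi))
  refine this.congr_deriv ?_
  unfold gaussPhi; ring

lemma gaussCdf_eq (x : ℝ) : gaussCdf x = ∫ t in Iic x, gaussPhi t := by
  rw [gaussCdf, gaussianReal_apply_eq_integral 0 one_ne_zero,
    ENNReal.toReal_ofReal (integral_nonneg fun t => gaussianPDFReal_nonneg 0 1 t)]
  exact integral_congr_ae (Filter.Eventually.of_forall fun t => (gaussPhi_eq t).symm)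

lemma hasDerivAt_gaussCdf (x : ℝ) : HasDerivAt gaussCdf (gaussPhi x) x := by
  have key : gaussCdf = fun y => gaussCdf 0 + ∫ t in (0:ℝ)..y, gaussPhi t := by
    funext y
    rw [gaussCdf_eq, gaussCdf_eq,
      ← intervalIntegral.integral_Iic_sub_Iic gaussPhi_integrable.integrableOn
        gaussPhi_integrable.integrableOn]
    ring
  rw [key]
  exact (intervalIntegral.integral_hasDerivAt_right
    (gaussPhi_integrable.intervalIntegrable)
    (continuous_gaussPhi.stronglyMeasurableAtFilter _ _)
    continuous_gaussPhi.continuousAt).const_add _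

lemma one_sub_gaussCdf (x : ℝ) : 1 - gaussCdf x = ∫ t in Ioi x, gaussPhi t := by
  have h := intervalIntegral.integral_Iic_add_Ioi (b := x) (f := gaussPhi) (μ := volume)
    gaussPhi_integrable.integrableOn gaussPhi_integrable.integrableOn
  rw [integral_gaussPhi] at h
  rw [gaussCdf_eq]; linarith

lemma gaussCdf_lt_one (x : ℝ) : gaussCdf x < 1 := by
  have h : 0 < ∫ t in Ioi x, gaussPhi t := by
    rw [setIntegral_pos_iff_support_of_nonneg_ae
      (Filter.Eventually.of_forall fun t => (gaussPhi_pos t).le)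
      gaussPhi_integrable.integrableOn]
    refine lt_of_lt_of_le ?_ (measure_mono fun t ht => ⟨(gaussPhi_pos t).ne', ht⟩)
    rw [Real.volume_Ioi]
    exact ENNReal.zero_lt_top
  have := one_sub_gaussCdf x
  linarith

lemma gaussCdf_zero : gaussCdf 0 = 1 / 2 := by
  have h1 : ∫ t in Iic (0:ℝ), gaussPhi t = ∫ t in Ioi (0:ℝ), gaussPhi t := by
    have := integral_comp_neg_Iic (0:ℝ) gaussPhi
    simp only [neg_zero] at this
    rw [← this]
    exact integral_congr_ae (Filter.Eventually.of_forall fun t => (gaussPhi_neg t).symm)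
  have h2 := one_sub_gaussCdf 0
  rw [gaussCdf_eq] at h2 ⊢
  linarith

/-- polynomial times `exp (-x^2/4)` tends to zero. -/
lemma tendsto_pow_mul_exp_quarter (n : ℕ) :
    Tendsto (fun x : ℝ => x ^ n * Real.exp (-x ^ 2 / 4)) atTop (𝓝 0) := by
  refine tendsto_of_tendsto_of_tendsto_of_le_of_le'
    tendsto_const_nhds (Real.tendsto_pow_mul_exp_neg_atTop_nhds_zero n) ?_ ?_
  · filter_upwards [eventually_ge_atTop (0:ℝ)] with x hx
    positivity
  · filter_upwards [eventually_ge_atTop (4:ℝ)] with x hx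
    have hx0 : (0:ℝ) ≤ x := by linarith
    refine mul_le_mul_of_nonneg_left (Real.exp_le_exp.mpr ?_) (by positivity)
    nlinarith

lemma one_sub_gaussCdf_le (x : ℝ) (hx : 0 ≤ x) :
    1 - gaussCdf x ≤ Real.exp (-x ^ 2 / 4) * ∫ t, Real.exp (-(1/4) * t ^ 2) := by
  have hint : Integrable (fun t : ℝ => Real.exp (-(1/4) * t ^ 2)) :=
    integrable_exp_neg_mul_sq (by norm_num)
  rw [one_sub_gaussCdf]
  calc ∫ t in Ioi x, gaussPhi t
      ≤ ∫ t in Ioi x, Real.exp (-x ^ 2 / 4) * Real.exp (-(1/4) * t ^ 2) := by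
        refine setIntegral_mono_on gaussPhi_integrable.integrableOn
          (hint.const_mul _).integrableOn measurableSet_Ioi fun t ht => ?_
        have hxt : x ≤ t := le_of_lt ht
        have ht2 : x ^ 2 ≤ t ^ 2 := by nlinarith
        have h1 : Real.exp (-t ^ 2 / 2) ≤ Real.exp (-x ^ 2 / 4) * Real.exp (-(1/4) * t ^ 2) := by
          rw [← Real.exp_add]
          exact Real.exp_le_exp.mpr (by linarith)
        calc gaussPhi t ≤ Real.exp (-t ^ 2 / 2) := by
              rw [gaussPhi, div_le_iff₀ (Real.sqrt_pos.mpr (by positivity))]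
              nlinarith [Real.exp_pos (-t^2/2), Real.sq_sqrt (by positivity : (0:ℝ) ≤ 2*Real.pi),
                Real.sqrt_nonneg (2*Real.pi), Real.pi_gt_three]
          _ ≤ _ := h1
    _ ≤ ∫ t, Real.exp (-x ^ 2 / 4) * Real.exp (-(1/4) * t ^ 2) :=
        setIntegral_le_integral (hint.const_mul _)
          (Filter.Eventually.of_forall fun t => by positivity)
    _ = Real.exp (-x ^ 2 / 4) * ∫ t, Real.exp (-(1/4) * t ^ 2) := integral_const_mul _ _

lemma tendsto_one_add_sq_mul :
    Tendsto (fun x : ℝ => (1 + x ^ 2) * (1 - gaussCdf x)) atTop (𝓝 0) := by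
  set C := ∫ t, Real.exp (-(1/4) * t ^ 2) with hC
  have hCpos : 0 ≤ C := integral_nonneg fun t => (Real.exp_pos _).le
  have hmaj : Tendsto (fun x : ℝ => (1 + x ^ 2) * Real.exp (-x ^ 2 / 4) * C) atTop (𝓝 0) := by
    have h0 := tendsto_pow_mul_exp_quarter 0
    have h2 := tendsto_pow_mul_exp_quarter 2
    have := ((h0.add h2).mul_const C)
    simpa [add_mul, mul_comm, mul_assoc, mul_left_comm] using this
  refine tendsto_of_tendsto_of_tendsto_of_le_of_le' tendsto_const_nhds hmaj ?_ ?_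
  · filter_upwards [eventually_ge_atTop (0:ℝ)] with x hx
    have := gaussCdf_lt_one x
    nlinarith
  · filter_upwards [eventually_ge_atTop (0:ℝ)] with x hx
    have h := one_sub_gaussCdf_le x hx
    have h1 : (0:ℝ) ≤ 1 + x ^ 2 := by positivity
    calc (1 + x ^ 2) * (1 - gaussCdf x) ≤ (1 + x ^ 2) * (Real.exp (-x ^ 2 / 4) * C) :=
          mul_le_mul_of_nonneg_left h h1
      _ = (1 + x ^ 2) * Real.exp (-x ^ 2 / 4) * C := by ring

lemma tendsto_mul_one_sub : Tendsto (fun x : ℝ => x * (1 - gaussCdf x)) atTop (𝓝 0) := by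
  refine tendsto_of_tendsto_of_tendsto_of_le_of_le' tendsto_const_nhds tendsto_one_add_sq_mul ?_ ?_
  · filter_upwards [eventually_ge_atTop (0:ℝ)] with x hx
    have := gaussCdf_lt_one x
    nlinarith
  · filter_upwards [eventually_ge_atTop (0:ℝ)] with x hx
    have := gaussCdf_lt_one x
    nlinarith [mul_nonneg (by nlinarith [sq_nonneg (x - 1)] : (0:ℝ) ≤ 1 + x ^ 2 - x)
      (by linarith : (0:ℝ) ≤ 1 - gaussCdf x)]

lemma tendsto_gaussPhi : Tendsto gaussPhi atTop (𝓝 0) := by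
  refine tendsto_of_tendsto_of_tendsto_of_le_of_le' tendsto_const_nhds
    (tendsto_pow_mul_exp_quarter 0) ?_ ?_
  · exact Filter.Eventually.of_forall fun x => (gaussPhi_pos x).le
  · filter_upwards [eventually_ge_atTop (0:ℝ)] with x hx
    rw [gaussPhi, pow_zero, one_mul, div_le_iff₀ (Real.sqrt_pos.mpr (by positivity))]
    have h1 : Real.exp (-x ^ 2 / 2) ≤ Real.exp (-x ^ 2 / 4) := Real.exp_le_exp.mpr (by nlinarith)
    nlinarith [Real.exp_pos (-x^2/4), Real.sq_sqrt (by positivity : (0:ℝ) ≤ 2*Real.pi),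
      Real.sqrt_nonneg (2*Real.pi), Real.pi_gt_three, Real.exp_pos (-x^2/2)]

lemma tendsto_mul_gaussPhi : Tendsto (fun x : ℝ => x * gaussPhi x) atTop (𝓝 0) := by
  refine tendsto_of_tendsto_of_tendsto_of_le_of_le' tendsto_const_nhds
    (tendsto_pow_mul_exp_quarter 1) ?_ ?_
  · filter_upwards [eventually_ge_atTop (0:ℝ)] with x hx
    exact mul_nonneg hx (gaussPhi_pos x).le
  · filter_upwards [eventually_ge_atTop (0:ℝ)] with x hx
    rw [pow_one]
    refine mul_le_mul_of_nonneg_left ?_ hx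
    rw [gaussPhi, div_le_iff₀ (Real.sqrt_pos.mpr (by positivity))]
    have h1 : Real.exp (-x ^ 2 / 2) ≤ Real.exp (-x ^ 2 / 4) := Real.exp_le_exp.mpr (by nlinarith)
    nlinarith [Real.exp_pos (-x^2/4), Real.sq_sqrt (by positivity : (0:ℝ) ≤ 2*Real.pi),
      Real.sqrt_nonneg (2*Real.pi), Real.pi_gt_three, Real.exp_pos (-x^2/2)]

noncomputable def Ufun (x : ℝ) : ℝ := gaussPhi x - x * (1 - gaussCdf x)

lemma hasDerivAt_Ufun (x : ℝ) : HasDerivAt Ufun (-(1 - gaussCdf x)) x := by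
  have h := (hasDerivAt_gaussPhi x).sub
    ((hasDerivAt_id x).mul ((hasDerivAt_const x (1:ℝ)).sub (hasDerivAt_gaussCdf x)))
  refine h.congr_deriv ?_
  simp

lemma Ufun_pos (x : ℝ) : 0 < Ufun x := by
  have hanti : StrictAnti Ufun := by
    refine strictAnti_of_deriv_neg fun y => ?_
    rw [(hasDerivAt_Ufun y).deriv]
    linarith [gaussCdf_lt_one y]
  have htend : Tendsto Ufun atTop (𝓝 0) := by
    have := tendsto_gaussPhi.sub tendsto_mul_one_sub
    rw [sub_zero] at this
    exact this
  have h1 : 0 ≤ Ufun (x + 1) := by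
    refine le_of_tendsto htend ?_
    filter_upwards [eventually_ge_atTop (x + 1)] with y hy
    exact hanti.antitone hy
  have := hanti (show x < x + 1 by linarith)
  linarith

noncomputable def Hfun (x : ℝ) : ℝ := (1 + x ^ 2) * (1 - gaussCdf x) - x * gaussPhi x

lemma hasDerivAt_Hfun (x : ℝ) : HasDerivAt Hfun (-2 * Ufun x) x := by
  have h := (((hasDerivAt_const x (1:ℝ)).add ((hasDerivAt_pow 2 x))).mul
      ((hasDerivAt_const x (1:ℝ)).sub (hasDerivAt_gaussCdf x))).sub
    ((hasDerivAt_id x).mul (hasDerivAt_gaussPhi x))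
  refine h.congr_deriv ?_
  simp [Ufun]; ring

lemma Hfun_pos (x : ℝ) : 0 < Hfun x := by
  have hanti : StrictAnti Hfun := by
    refine strictAnti_of_deriv_neg fun y => ?_
    rw [(hasDerivAt_Hfun y).deriv]
    linarith [Ufun_pos y]
  have htend : Tendsto Hfun atTop (𝓝 0) := by
    have := tendsto_one_add_sq_mul.sub tendsto_mul_gaussPhi
    rw [sub_zero] at this
    exact this
  have h1 : 0 ≤ Hfun (x + 1) := by
    refine le_of_tendsto htend ?_
    filter_upwards [eventually_ge_atTop (x + 1)] with y hy
    exact hanti.antitone hy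
  have := hanti (show x < x + 1 by linarith)
  linarith

noncomputable def Afun (x : ℝ) : ℝ := gaussCdf x - 1 / 2 - x * gaussPhi x

lemma hasDerivAt_Afun (x : ℝ) : HasDerivAt Afun (x ^ 2 * gaussPhi x) x := by
  have h := ((hasDerivAt_gaussCdf x).sub_const (1/2)).sub
    ((hasDerivAt_id x).mul (hasDerivAt_gaussPhi x))
  refine h.congr_deriv ?_
  simp; ring

lemma Afun_nonneg {x : ℝ} (hx : 0 ≤ x) : 0 ≤ Afun x := by
  have hmono : Monotone Afun :=
    monotone_of_deriv_nonneg (fun y => (hasDerivAt_Afun y).differentiableAt)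
      (fun y => by
        rw [(hasDerivAt_Afun y).deriv]
        exact mul_nonneg (sq_nonneg y) (gaussPhi_pos y).le)
  have h0 : Afun 0 = 0 := by simp [Afun, gaussCdf_zero]
  have := hmono hx
  linarith

noncomputable def Kfun (x : ℝ) : ℝ := x ^ 3 * gaussPhi x - (1 - x ^ 2) * Afun x

lemma hasDerivAt_Kfun (x : ℝ) :
    HasDerivAt Kfun (2 * x ^ 2 * gaussPhi x + 2 * x * Afun x) x := by
  have h := ((hasDerivAt_pow 3 x).mul (hasDerivAt_gaussPhi x)).sub
    (((hasDerivAt_const x (1:ℝ)).sub (hasDerivAt_pow 2 x)).mul (hasDerivAt_Afun x))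
  refine h.congr_deriv ?_
  simp [Afun]; ring

lemma Kfun_nonneg {x : ℝ} (hx : 0 ≤ x) : 0 ≤ Kfun x := by
  have hmono : MonotoneOn Kfun (Ici 0) := by
    refine monotoneOn_of_deriv_nonneg (convex_Ici 0)
      (fun y _ => ((hasDerivAt_Kfun y).differentiableAt).continuousAt.continuousWithinAt)
      (fun y hy => ((hasDerivAt_Kfun y).differentiableAt).differentiableWithinAt)
      (fun y hy => ?_)
    rw [interior_Ici] at hy
    rw [(hasDerivAt_Kfun y).deriv]
    have hy0 : (0:ℝ) ≤ y := le_of_lt hy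
    have := Afun_nonneg hy0
    have := gaussPhi_pos y
    positivity
  have h0 : Kfun 0 = 0 := by simp [Kfun, Afun, gaussCdf_zero]
  have := hmono (self_mem_Ici) (mem_Ici.mpr hx) hx
  linarith

theorem elementary_gaussian_inequality :
    ∀ x : ℝ, 0 < x → (gaussCdf x - 1 / 2) * bfun' x < gaussPhi x * bfun x := by
  intro x hx
  have hP : 0 < gaussPhi x := gaussPhi_pos x
  have hc : gaussCdf x < 1 := gaussCdf_lt_one x
  have hM : x * gaussPhi x < (1 + x ^ 2) * (1 - gaussCdf x) := by
    have := Hfun_pos x; unfold Hfun at this; linarith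
  have hA : 0 ≤ gaussCdf x - 1 / 2 - x * gaussPhi x := Afun_nonneg hx.le
  have hK : 0 ≤ x ^ 3 * gaussPhi x
      - (1 - x ^ 2) * (gaussCdf x - 1 / 2 - x * gaussPhi x) := by
    have := Kfun_nonneg hx.le; unfold Kfun Afun at this; linarith
  rw [bfun, bfun']
  set P := gaussPhi x with hPdef
  set c := gaussCdf x with hcdef
  rcases le_or_gt (P - 2 * x * (1 - c)) 0 with hB | hB
  · nlinarith [mul_nonneg hA (neg_nonneg.mpr hB),
      mul_pos (mul_pos (mul_pos hx hx) hP) (by linarith : (0:ℝ) < 1 - c)]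
  · have e1 : (1 + x ^ 2) * (P - 2 * x * (1 - c)) ≤ (1 - x ^ 2) * P := by nlinarith
    have e2 : (c - 1/2 - x*P) * ((1 + x ^ 2) * (P - 2 * x * (1 - c))) ≤
        (c - 1/2 - x*P) * ((1 - x ^ 2) * P) :=
      mul_le_mul_of_nonneg_left e1 hA
    have e3 : (1 - x ^ 2) * (c - 1/2 - x*P) * P ≤ x ^ 3 * P * P := by
      nlinarith [mul_le_mul_of_nonneg_right hK hP.le]
    have e4 : x ^ 3 * P * P < x ^ 2 * P * ((1 + x ^ 2) * (1 - c)) := by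
      nlinarith [mul_lt_mul_of_pos_left hM (by positivity : (0:ℝ) < x ^ 2 * P)]
    have e5 : (1 + x ^ 2) * ((c - 1/2 - x*P) * (P - 2 * x * (1 - c))) <
        (1 + x ^ 2) * (x ^ 2 * P * (1 - c)) := by nlinarith [e2, e3, e4]
    have e6 : (c - 1/2 - x*P) * (P - 2 * x * (1 - c)) < x ^ 2 * P * (1 - c) :=
      lt_of_mul_lt_mul_left e5 (by positivity)
    nlinarith [e6]
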